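/- For K ≥ 1 and all x, y ∈ ℝⁿ with |x| ≥ 1 and |y| ≥ 1, one has |x/|x|^(1+1/K) - y/|y|^(1+1/K)| ≤ 2^(1-1/K)·|x-y|^(1/K)/(|x|·|y|)^(1/K). -/

import Mathlib

open Real

private lemma key18_add (p a b : ℝ) (hp0 : 0 ≤ p) (hp1 : p ≤ 1) (ha : 0 ≤ a) (hb : 0 ≤ b) :
    (a + b) ^ p ≤ a ^ p + b ^ p := by
  have := NNReal.rpow_add_le_add_rpow (⟨a, ha⟩ : NNReal) ⟨b, hb⟩ hp0 hp1
  exact_mod_cast this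

private lemma key18_pm (p a b : ℝ) (hp0 : 0 ≤ p) (hp1 : p ≤ 1) (ha : 0 ≤ a) (hb : 0 ≤ b) :
    a ^ p + b ^ p ≤ 2 ^ (1 - p) * (a + b) ^ p := by
  have hconc := (Real.concaveOn_rpow hp0 hp1).2 (Set.mem_Ici.2 ha) (Set.mem_Ici.2 hb)
      (by norm_num : (0:ℝ) ≤ 1/2) (by norm_num : (0:ℝ) ≤ 1/2) (by norm_num)
  simp only [smul_eq_mul] at hconc
  have hhalf : ((1:ℝ)/2 * a + 1/2 * b) ^ p = (a + b) ^ p / 2 ^ p := by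
    rw [show (1:ℝ)/2 * a + 1/2 * b = (a + b)/2 by ring,
      Real.div_rpow (by linarith) (by norm_num)]
  rw [hhalf] at hconc
  have h2 : (2:ℝ) ^ (1 - p) = 2 / 2 ^ p := by
    rw [Real.rpow_sub two_pos, Real.rpow_one]
  have h2p : (0:ℝ) < 2 ^ p := Real.rpow_pos_of_pos two_pos p
  have h3 : (a ^ p + b ^ p) / 2 ≤ (a + b) ^ p / 2 ^ p := by linarith
  rw [div_le_div_iff₀ (by norm_num) h2p] at h3
  rw [h2, div_mul_eq_mul_div, le_div_iff₀ h2p]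
  linarith

private lemma key18_abs (p a b : ℝ) (hp0 : 0 ≤ p) (hp1 : p ≤ 1) (ha : 0 ≤ a) (hb : 0 ≤ b) :
    |a ^ p - b ^ p| ≤ |a - b| ^ p := by
  wlog hab : b ≤ a generalizing a b
  · rw [abs_sub_comm, abs_sub_comm a b]; exact this b a hb ha (le_of_not_ge hab)
  have h1 : b ^ p ≤ a ^ p := Real.rpow_le_rpow hb hab hp0
  rw [abs_of_nonneg (by linarith), abs_of_nonneg (by linarith)]
  have h := key18_add p (a - b) b hp0 hp1 (by linarith) hb
  rw [sub_add_cancel] at h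
  linarith

private lemma key18_main (p r s c : ℝ) (hp0 : 0 < p) (hp1 : p ≤ 1) (hr : 0 < r) (hs : 0 < s)
    (hc : |c| ≤ r * s) :
    r ^ (2*p) + s ^ (2*p) - 2 * (r ^ (p-1) * s ^ (p-1)) * c ≤
      2 ^ (2 - 2*p) * (r^2 + s^2 - 2*c) ^ p := by
  have hrs : 0 < r * s := mul_pos hr hs
  set t : ℝ := (r*s - c) / (2*(r*s)) with ht_def
  have hcab := abs_le.1 hc
  have ht0 : 0 ≤ t := div_nonneg (by linarith [hcab.2]) (by linarith)
  have ht1 : t ≤ 1 := by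
    rw [div_le_one (by linarith)]; linarith [hcab.1]
  have hc' : c = (1 - 2*t) * (r*s) := by
    rw [ht_def]
    field_simp
    ring
  have hsq : ∀ z : ℝ, 0 ≤ z → (z ^ p) ^ 2 = (z ^ 2) ^ p := fun z hz => by
    rw [← Real.rpow_natCast (z ^ p) 2, ← Real.rpow_mul hz, mul_comm,
      Real.rpow_natCast_mul hz]
  have h2pow : ((2:ℝ) ^ (1-p)) ^ 2 = 2 ^ (2 - 2*p) := by
    rw [← Real.rpow_natCast ((2:ℝ) ^ (1-p)) 2, ← Real.rpow_mul (by norm_num : (0:ℝ) ≤ 2)]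
    norm_num
    ring_nf
  have hE1 : (r ^ p + s ^ p) ^ 2 ≤ 2 ^ (2 - 2*p) * ((r + s) ^ 2) ^ p := by
    have h1 := key18_pm p r s hp0.le hp1 hr.le hs.le
    calc (r ^ p + s ^ p) ^ 2 ≤ (2 ^ (1-p) * (r + s) ^ p) ^ 2 := by
          apply pow_le_pow_left₀ (by positivity) h1
      _ = (2 ^ (1-p)) ^ 2 * ((r + s) ^ p) ^ 2 := by ring
      _ = 2 ^ (2 - 2*p) * ((r + s) ^ 2) ^ p := by
          rw [hsq (r + s) (by linarith), h2pow]
  have hE2 : (r ^ p - s ^ p) ^ 2 ≤ 2 ^ (2 - 2*p) * ((r - s) ^ 2) ^ p := by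
    have habs := key18_abs p r s hp0.le hp1 hr.le hs.le
    have h1 : (r ^ p - s ^ p) ^ 2 ≤ (|r - s| ^ p) ^ 2 := by
      rw [← sq_abs (r ^ p - s ^ p)]
      exact pow_le_pow_left₀ (abs_nonneg _) habs 2
    have h2 : (|r - s| ^ p) ^ 2 = ((r - s) ^ 2) ^ p := by
      rw [hsq |r - s| (abs_nonneg _), sq_abs]
    have h3 : (1:ℝ) ≤ 2 ^ (2 - 2*p) := Real.one_le_rpow one_le_two (by linarith)
    have h4 : (0:ℝ) ≤ ((r - s) ^ 2) ^ p := Real.rpow_nonneg (sq_nonneg _) p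
    nlinarith
  have hconc : t * ((r+s)^2) ^ p + (1-t) * ((r-s)^2) ^ p
      ≤ (t * (r+s)^2 + (1-t) * (r-s)^2) ^ p := by
    have := (Real.concaveOn_rpow hp0.le hp1).2 (Set.mem_Ici.2 (sq_nonneg (r+s)))
      (Set.mem_Ici.2 (sq_nonneg (r-s))) (show (0:ℝ) ≤ t from ht0)
      (show (0:ℝ) ≤ 1 - t by linarith) (show t + (1 - t) = 1 by ring)
    simpa [smul_eq_mul] using this
  have hsum : t * (r+s)^2 + (1-t) * (r-s)^2 = r^2 + s^2 - 2*c := by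
    rw [hc']; ring
  have h2p : ∀ z : ℝ, 0 < z → z ^ (2*p) = (z ^ p) ^ 2 := fun z hz => by
    rw [← Real.rpow_natCast (z ^ p) 2, ← Real.rpow_mul hz.le]
    norm_num [mul_comm]
  have hLid : r ^ (2*p) + s ^ (2*p) - 2 * (r ^ (p-1) * s ^ (p-1)) * c
      = t * (r ^ p + s ^ p) ^ 2 + (1-t) * (r ^ p - s ^ p) ^ 2 := by
    rw [h2p r hr, h2p s hs, Real.rpow_sub_one hr.ne', Real.rpow_sub_one hs.ne', hc']
    field_simp
    ring
  calc r ^ (2*p) + s ^ (2*p) - 2 * (r ^ (p-1) * s ^ (p-1)) * c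
      = t * (r ^ p + s ^ p) ^ 2 + (1-t) * (r ^ p - s ^ p) ^ 2 := hLid
    _ ≤ t * (2 ^ (2 - 2*p) * ((r+s)^2) ^ p) + (1-t) * (2 ^ (2 - 2*p) * ((r-s)^2) ^ p) := by
        exact add_le_add (mul_le_mul_of_nonneg_left hE1 ht0)
          (mul_le_mul_of_nonneg_left hE2 (by linarith))
    _ = 2 ^ (2 - 2*p) * (t * ((r+s)^2) ^ p + (1-t) * ((r-s)^2) ^ p) := by ring
    _ ≤ 2 ^ (2 - 2*p) * (t * (r+s)^2 + (1-t) * (r-s)^2) ^ p :=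
        mul_le_mul_of_nonneg_left hconc (by positivity)
    _ = 2 ^ (2 - 2*p) * (r^2 + s^2 - 2*c) ^ p := by rw [hsum]

private lemma key18_vec {E : Type*} [NormedAddCommGroup E] [InnerProductSpace ℝ E]
    (p : ℝ) (hp0 : 0 < p) (hp1 : p ≤ 1) (u v : E) (hu : u ≠ 0) (hv : v ≠ 0) :
    ‖(‖u‖ ^ (p-1)) • u - (‖v‖ ^ (p-1)) • v‖ ≤ 2 ^ (1-p) * ‖u - v‖ ^ p := by
  have hru : 0 < ‖u‖ := norm_pos_iff.2 hu
  have hrv : 0 < ‖v‖ := norm_pos_iff.2 hv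
  have hcabs : |(inner ℝ u v : ℝ)| ≤ ‖u‖ * ‖v‖ := abs_real_inner_le_norm u v
  have hkey := key18_main p ‖u‖ ‖v‖ (inner ℝ u v) hp0 hp1 hru hrv hcabs
  have e : ∀ z : ℝ, 0 < z → (z ^ (p-1)) ^ 2 * z ^ 2 = z ^ (2*p) := fun z hz => by
    rw [Real.rpow_sub_one hz.ne', div_pow,
      div_mul_cancel₀ _ (pow_ne_zero 2 hz.ne'),
      ← Real.rpow_natCast (z ^ p) 2, ← Real.rpow_mul hz.le]
    norm_num [mul_comm]
  have hL : ‖(‖u‖ ^ (p-1)) • u - (‖v‖ ^ (p-1)) • v‖ ^ 2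
      = ‖u‖ ^ (2*p) + ‖v‖ ^ (2*p) - 2 * (‖u‖ ^ (p-1) * ‖v‖ ^ (p-1)) * (inner ℝ u v : ℝ) := by
    rw [norm_sub_sq_real, real_inner_smul_left, real_inner_smul_right, norm_smul, norm_smul,
      mul_pow, mul_pow, Real.norm_eq_abs, Real.norm_eq_abs,
      abs_of_nonneg (Real.rpow_nonneg hru.le _), abs_of_nonneg (Real.rpow_nonneg hrv.le _),
      e ‖u‖ hru, e ‖v‖ hrv]
    ring
  have hR : (2 ^ (1-p) * ‖u - v‖ ^ p) ^ 2
      = 2 ^ (2 - 2*p) * (‖u‖^2 + ‖v‖^2 - 2*(inner ℝ u v : ℝ)) ^ p := by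
    have h1 : ‖u - v‖ ^ 2 = ‖u‖^2 + ‖v‖^2 - 2*(inner ℝ u v : ℝ) := by
      rw [norm_sub_sq_real]; ring
    have h2pow : ((2:ℝ) ^ (1-p)) ^ 2 = 2 ^ (2 - 2*p) := by
      rw [← Real.rpow_natCast ((2:ℝ) ^ (1-p)) 2, ← Real.rpow_mul (by norm_num : (0:ℝ) ≤ 2)]
      norm_num
      ring_nf
    have hsq : (‖u - v‖ ^ p) ^ 2 = (‖u - v‖ ^ 2) ^ p := by
      rw [← Real.rpow_natCast (‖u - v‖ ^ p) 2, ← Real.rpow_mul (norm_nonneg _), mul_comm,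
        Real.rpow_natCast_mul (norm_nonneg _)]
    rw [mul_pow, h2pow, hsq, h1]
  have hfin : ‖(‖u‖ ^ (p-1)) • u - (‖v‖ ^ (p-1)) • v‖ ^ 2
      ≤ (2 ^ (1-p) * ‖u - v‖ ^ p) ^ 2 := by
    rw [hL, hR]; exact hkey
  exact (pow_le_pow_iff_left₀ (norm_nonneg _) (by positivity) two_ne_zero).mp hfin

theorem stmt_18 (n : ℕ) (K : ℝ) (hK : 1 ≤ K)
    (x y : EuclideanSpace ℝ (Fin n)) (hx : 1 ≤ ‖x‖) (hy : 1 ≤ ‖y‖) :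
    ‖(‖x‖ ^ (1 + 1 / K))⁻¹ • x - (‖y‖ ^ (1 + 1 / K))⁻¹ • y‖ ≤
      2 ^ (1 - 1 / K) * ‖x - y‖ ^ (1 / K) / (‖x‖ * ‖y‖) ^ (1 / K) := by
  have hK0 : (0:ℝ) < K := lt_of_lt_of_le one_pos hK
  set p : ℝ := 1 / K with hp_def
  have hp0 : 0 < p := by positivity
  have hp1 : p ≤ 1 := by rw [hp_def, div_le_one hK0]; exact hK
  have hX : (0:ℝ) < ‖x‖ := lt_of_lt_of_le one_pos hx
  have hY : (0:ℝ) < ‖y‖ := lt_of_lt_of_le one_pos hy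
  have hx0 : x ≠ 0 := by intro h; rw [h, norm_zero] at hx; linarith
  have hy0 : y ≠ 0 := by intro h; rw [h, norm_zero] at hy; linarith
  set u : EuclideanSpace ℝ (Fin n) := (‖x‖^2)⁻¹ • x with hu_def
  set v : EuclideanSpace ℝ (Fin n) := (‖y‖^2)⁻¹ • y with hv_def
  have hu0 : u ≠ 0 := smul_ne_zero (inv_ne_zero (pow_ne_zero 2 hX.ne')) hx0
  have hv0 : v ≠ 0 := smul_ne_zero (inv_ne_zero (pow_ne_zero 2 hY.ne')) hy0
  have hnu : ‖u‖ = ‖x‖⁻¹ := by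
    rw [hu_def, norm_smul, Real.norm_eq_abs, abs_of_nonneg (by positivity), pow_two, mul_inv,
      mul_assoc, inv_mul_cancel₀ hX.ne', mul_one]
  have hnv : ‖v‖ = ‖y‖⁻¹ := by
    rw [hv_def, norm_smul, Real.norm_eq_abs, abs_of_nonneg (by positivity), pow_two, mul_inv,
      mul_assoc, inv_mul_cancel₀ hY.ne', mul_one]
  have hcoeff : ∀ z : ℝ, 0 < z → (z⁻¹) ^ (p-1) * (z^2)⁻¹ = (z ^ (1 + p))⁻¹ := fun z hz => by
    rw [← Real.rpow_neg_one z, ← Real.rpow_natCast z 2, ← Real.rpow_mul hz.le,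
      ← Real.rpow_neg hz.le, ← Real.rpow_add hz, ← Real.rpow_neg hz.le]
    norm_num
    ring_nf
  have heqx : (‖x‖ ^ (1 + 1/K))⁻¹ • x = (‖u‖ ^ (p-1)) • u := by
    rw [hu_def, smul_smul, hnu, hcoeff ‖x‖ hX]
  have heqy : (‖y‖ ^ (1 + 1/K))⁻¹ • y = (‖v‖ ^ (p-1)) • v := by
    rw [hv_def, smul_smul, hnv, hcoeff ‖y‖ hY]
  have hdist : ‖u - v‖ = ‖x - y‖ / (‖x‖ * ‖y‖) := by
    have h := EuclideanGeometry.dist_inversion_inversion (c := (0 : EuclideanSpace ℝ (Fin n)))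
      hx0 hy0 1
    simp only [EuclideanGeometry.inversion, dist_zero_right, vsub_eq_sub, sub_zero, vadd_eq_add,
      add_zero, one_div, div_pow, one_pow, dist_eq_norm, inv_pow] at h
    rw [hu_def, hv_def, h]
    field_simp
  calc ‖(‖x‖ ^ (1 + 1/K))⁻¹ • x - (‖y‖ ^ (1 + 1/K))⁻¹ • y‖
      = ‖(‖u‖ ^ (p-1)) • u - (‖v‖ ^ (p-1)) • v‖ := by rw [heqx, heqy]
    _ ≤ 2 ^ (1-p) * ‖u - v‖ ^ p := key18_vec p hp0 hp1 u v hu0 hv0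
    _ = 2 ^ (1 - 1/K) * ‖x - y‖ ^ (1/K) / (‖x‖ * ‖y‖) ^ (1/K) := by
        rw [hdist, Real.div_rpow (norm_nonneg _) (by positivity)]
        rw [hp_def]
        ring
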